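/- For 0 < ε < 1, let A = (1/√(1+ε²)) · [[1, 1, −1, −1], [ε, ε, ε, ε]] ∈ ℝ^{2×4} and let L^⊥ = {Aᵀy : y ∈ ℝ²}. Then ρ(A) = ε/√(1+ε²) and σ(L^⊥) = 1. (In particular, σ(L^⊥) can be arbitrarily larger than ρ(A).) -/

import Mathlib

noncomputable section
open Matrix

/-- The Euclidean norm of a vector in ℝᵐ. -/
def eNorm {m : ℕ} (y : Fin m → ℝ) : ℝ := Real.sqrt (∑ k, y k ^ 2)

/-- The condition measure `ρ(A) := max_{‖y‖₂ = 1} min_{i} ⟨a_i, y⟩`,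
where `a_1, …, a_n` are the columns of `A`. -/
def rho {m n : ℕ} (A : Matrix (Fin m) (Fin n) ℝ) : ℝ :=
  sSup {t | ∃ y : Fin m → ℝ, eNorm y = 1 ∧ t = ⨅ i, ∑ k, A k i * y k}

/-- The ℓ∞ norm of a vector in ℝⁿ. -/
def linf {n : ℕ} (x : Fin n → ℝ) : ℝ := ⨆ j, |x j|

/-- The maximum support index set `J(S)` of a set `S ⊆ ℝⁿ`:
indices `j` such that `x_j > 0` for some nonnegative `x ∈ S`. -/
def maxSupport {n : ℕ} (S : Set (Fin n → ℝ)) : Set (Fin n) :=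
  {j | ∃ x ∈ S, (∀ k, 0 ≤ x k) ∧ 0 < x j}

/-- `σ_j(S) := max {x_j : x ∈ S ∩ ℝⁿ₊, ‖x‖_∞ ≤ 1}`. -/
def sigmaJ {n : ℕ} (S : Set (Fin n → ℝ)) (j : Fin n) : ℝ :=
  sSup {t | ∃ x ∈ S, (∀ k, 0 ≤ x k) ∧ linf x ≤ 1 ∧ x j = t}

open Classical in
/-- `σ(S) := min_{j ∈ J(S)} σ_j(S)` when `J(S) ≠ ∅`, and `σ(S) := 1` otherwise. -/
def sigmaCond {n : ℕ} (S : Set (Fin n → ℝ)) : ℝ :=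
  if maxSupport S = ∅ then 1 else sInf (sigmaJ S '' maxSupport S)

/-- The matrix `A = (1/√(1+ε²)) ⬝ [[1, 1, −1, −1], [ε, ε, ε, ε]]`. -/
def A17 (ε : ℝ) : Matrix (Fin 2) (Fin 4) ℝ :=
  (1 / Real.sqrt (1 + ε ^ 2)) • !![1, 1, -1, -1; ε, ε, ε, ε]

/-- For `0 < ε < 1` and `A = (1/√(1+ε²)) ⬝ [[1, 1, −1, −1], [ε, ε, ε, ε]]` with
`L^⊥ = {Aᵀy : y ∈ ℝ²}`, one has `ρ(A) = ε/√(1+ε²)` and `σ(L^⊥) = 1`. -/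
theorem rho_and_sigma_of_A17 (ε : ℝ) (hε0 : 0 < ε) (hε1 : ε < 1) :
    rho (A17 ε) = ε / Real.sqrt (1 + ε ^ 2) ∧
      sigmaCond ((LinearMap.range (A17 ε)ᵀ.mulVecLin : Submodule ℝ (Fin 4 → ℝ)) :
        Set (Fin 4 → ℝ)) = 1 := by
  have hs : 0 < Real.sqrt (1 + ε ^ 2) := Real.sqrt_pos.mpr (by positivity)
  set s := Real.sqrt (1 + ε ^ 2) with hsdef
  have hA1 : ∀ i : Fin 4, A17 ε 1 i = ε / s := by
    intro i; fin_cases i <;> simp [A17, ← hsdef] <;> ring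
  have hA00 : A17 ε 0 0 = 1 / s := by simp [A17, ← hsdef]
  have hA02 : A17 ε 0 2 = -(1 / s) := by simp [A17, ← hsdef]
  constructor
  · -- ρ(A) = ε/s
    have hmem : (ε / s) ∈
        {t | ∃ y : Fin 2 → ℝ, eNorm y = 1 ∧ t = ⨅ i, ∑ k, A17 ε k i * y k} := by
      refine ⟨![0, 1], ?_, ?_⟩
      · simp [eNorm, Fin.sum_univ_two]
      · have h : ∀ i : Fin 4, (∑ k, A17 ε k i * (![0, 1] : Fin 2 → ℝ) k) = ε / s := by
          intro i
          rw [Fin.sum_univ_two]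
          simp [hA1 i]
        simp_rw [h]
        exact (ciInf_const).symm
    have hub : ∀ t ∈ {t | ∃ y : Fin 2 → ℝ, eNorm y = 1 ∧ t = ⨅ i, ∑ k, A17 ε k i * y k},
        t ≤ ε / s := by
      rintro t ⟨y, hy, rfl⟩
      have hnorm : y 0 ^ 2 + y 1 ^ 2 = 1 := by
        have h := hy
        unfold eNorm at h
        rw [Fin.sum_univ_two] at h
        exact Real.sqrt_eq_one.mp h
      have hy1 : y 1 ≤ 1 := by nlinarith [sq_nonneg (y 0), sq_nonneg (y 1 - 1)]
      have hbdd : BddBelow (Set.range fun i : Fin 4 => ∑ k, A17 ε k i * y k) :=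
        (Set.finite_range _).bddBelow
      have h0 : (⨅ i, ∑ k, A17 ε k i * y k) ≤ ∑ k, A17 ε k 0 * y k := ciInf_le hbdd 0
      have h2 : (⨅ i, ∑ k, A17 ε k i * y k) ≤ ∑ k, A17 ε k 2 * y k := ciInf_le hbdd 2
      rw [Fin.sum_univ_two, hA00, hA1 0] at h0
      rw [Fin.sum_univ_two, hA02, hA1 2] at h2
      have hεs : 0 ≤ ε / s := (div_pos hε0 hs).le
      have h1s : 0 ≤ 1 / s := (one_div_pos.mpr hs).le
      have hkey : ε / s * y 1 ≤ ε / s := by nlinarith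
      rcases le_total 0 (y 0) with h | h
      · have : -(1 / s) * y 0 ≤ 0 := by nlinarith
        linarith
      · have : 1 / s * y 0 ≤ 0 := by nlinarith
        linarith
    exact le_antisymm (csSup_le ⟨ε / s, hmem⟩ hub) (le_csSup ⟨ε / s, hub⟩ hmem)
  · -- σ(L⊥) = 1
    set S : Set (Fin 4 → ℝ) :=
      ((LinearMap.range (A17 ε)ᵀ.mulVecLin : Submodule ℝ (Fin 4 → ℝ)) :
        Set (Fin 4 → ℝ)) with hS
    have hx1 : (fun _ => (1 : ℝ)) ∈ S := by
      rw [hS]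
      refine SetLike.mem_coe.mpr (LinearMap.mem_range.mpr ⟨![0, s / ε], ?_⟩)
      funext j
      have h : ((A17 ε)ᵀ *ᵥ ![0, s / ε]) j
          = A17 ε 0 j * 0 + A17 ε 1 j * (s / ε) := by
        simp [Matrix.mulVec, dotProduct, Fin.sum_univ_two]
      show ((A17 ε)ᵀ *ᵥ ![0, s / ε]) j = 1
      rw [h, hA1 j]
      field_simp
      simp
    have hlinf1 : linf (fun _ : Fin 4 => (1 : ℝ)) = 1 := by
      simp [linf]
    have hub2 : ∀ j : Fin 4, ∀ t ∈ {t | ∃ x ∈ S, (∀ k, 0 ≤ x k) ∧ linf x ≤ 1 ∧ x j = t},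
        t ≤ 1 := by
      rintro j t ⟨x, _, _, hlx, rfl⟩
      calc x j ≤ |x j| := le_abs_self _
        _ ≤ linf x := le_ciSup (Set.finite_range fun k => |x k|).bddAbove j
        _ ≤ 1 := hlx
    have hsig : ∀ j : Fin 4, sigmaJ S j = 1 := by
      intro j
      have hmem1 : (1 : ℝ) ∈ {t | ∃ x ∈ S, (∀ k, 0 ≤ x k) ∧ linf x ≤ 1 ∧ x j = t} :=
        ⟨fun _ => 1, hx1, fun _ => zero_le_one, hlinf1.le, rfl⟩
      exact le_antisymm (csSup_le ⟨1, hmem1⟩ (hub2 j)) (le_csSup ⟨1, hub2 j⟩ hmem1)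
    have hJ : (0 : Fin 4) ∈ maxSupport S :=
      ⟨fun _ => 1, hx1, fun _ => zero_le_one, one_pos⟩
    have hne : maxSupport S ≠ ∅ := fun h => absurd hJ (h ▸ Set.notMem_empty _)
    rw [sigmaCond, if_neg hne]
    have himg : sigmaJ S '' maxSupport S = {1} := by
      apply Set.Subset.antisymm
      · rintro t ⟨j, _, rfl⟩
        exact Set.mem_singleton_iff.mpr (hsig j)
      · rintro t ht
        rw [Set.mem_singleton_iff] at ht
        exact ⟨0, hJ, by rw [hsig 0, ht]⟩
    rw [himg, csInf_singleton]

end
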